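/- arXiv:1306.2624 — 2 statements merged into one kernel-verified Lean document; each statement's English description precedes it below -/
import Mathlib

section
/- Two images A and B of size k × m over Z_n (with k, m ≥ 1) are strongly equivalent if and only if their natural entropy distance vanishes: there exists a scalar image S with A = S + B if and only if ν̂(A, B) = E(A + (−B)) = 0, where −B is the pixel-wise additive inverse of B in Z_n. -/
open Finset Real

/-- The fraction of pixels of the image `A` (of size `k × m`, with values in `ZMod n`)
having gray level `x`. -/
noncomputable def pixelProb (k m n : ℕ) (A : Fin k × Fin m → ZMod n) (x : ZMod n) : ℝ :=
  ((Finset.univ.filter (fun p => A p = x)).card : ℝ) / (k * m)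

/-- The entropy of an image `A : Fin k × Fin m → ZMod n`, with the convention
`0 * log₂ 0 = 0` (automatic since `Real.logb` of `0` is multiplied by `0`). -/
noncomputable def entropy (k m n : ℕ) [NeZero n] (A : Fin k × Fin m → ZMod n) : ℝ :=
  -∑ x : ZMod n, pixelProb k m n A x * Real.logb 2 (pixelProb k m n A x)

lemma pixelProb_nonneg (k m n : ℕ) (A : Fin k × Fin m → ZMod n) (x : ZMod n) :
    0 ≤ pixelProb k m n A x := by
  unfold pixelProb
  positivity

lemma pixelProb_le_one (k m n : ℕ) (hk : 0 < k) (hm : 0 < m)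
    (A : Fin k × Fin m → ZMod n) (x : ZMod n) :
    pixelProb k m n A x ≤ 1 := by
  unfold pixelProb
  rw [div_le_one (by positivity)]
  calc ((Finset.univ.filter (fun p => A p = x)).card : ℝ)
      ≤ ((Finset.univ : Finset (Fin k × Fin m)).card : ℝ) := by
        exact_mod_cast Finset.card_le_card (Finset.filter_subset _ _)
    _ = (k * m : ℝ) := by simp

/-- Entropy is zero iff the image is constant. -/
lemma entropy_eq_zero_iff_const (k m n : ℕ) [NeZero n] (hk : 0 < k) (hm : 0 < m)
    (C : Fin k × Fin m → ZMod n) :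
    entropy k m n C = 0 ↔ ∃ c : ZMod n, ∀ p, C p = c := by
  have hkm : (0:ℝ) < (k * m : ℝ) := by positivity
  constructor
  · intro h
    unfold entropy at h
    rw [neg_eq_zero] at h
    have hterm : ∀ x ∈ (Finset.univ : Finset (ZMod n)),
        pixelProb k m n C x * Real.logb 2 (pixelProb k m n C x) = 0 := by
      rw [← Finset.sum_eq_zero_iff_of_nonpos]
      · exact h
      · intro x _
        exact mul_nonpos_of_nonneg_of_nonpos (pixelProb_nonneg k m n C x)
          (Real.logb_nonpos one_lt_two (pixelProb_nonneg k m n C x)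
            (pixelProb_le_one k m n hk hm C x))
    set p0 : Fin k × Fin m := (⟨0, hk⟩, ⟨0, hm⟩)
    set c := C p0 with hc
    refine ⟨c, ?_⟩
    have hpos : 0 < pixelProb k m n C c := by
      unfold pixelProb
      apply div_pos _ hkm
      have : 0 < (Finset.univ.filter (fun p => C p = c)).card := by
        apply Finset.card_pos.mpr
        exact ⟨p0, by simp [hc]⟩
      exact_mod_cast this
    have := hterm c (Finset.mem_univ c)
    rcases mul_eq_zero.mp this with h1 | h1
    · exact absurd h1 (ne_of_gt hpos)
    · have hone : pixelProb k m n C c = 1 := by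
        have hlog : Real.log (pixelProb k m n C c) = 0 := by
          have : Real.log (pixelProb k m n C c) / Real.log 2 = 0 := h1
          have h2 : Real.log 2 ≠ 0 := Real.log_ne_zero_of_pos_of_ne_one (by norm_num) (by norm_num)
          exact (div_eq_zero_iff.mp this).resolve_right h2
        have := Real.log_eq_zero.mp hlog
        rcases this with h | h | h
        · exact absurd h (ne_of_gt hpos)
        · exact h
        · linarith [hpos]
      -- card of filter = k * m, hence filter = univ
      have hcard : (Finset.univ.filter (fun p => C p = c)).card = k * m := by
        unfold pixelProb at hone
        rw [div_eq_one_iff_eq (ne_of_gt hkm)] at hone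
        exact_mod_cast hone
      have hfull : Finset.univ.filter (fun p => C p = c) =
          (Finset.univ : Finset (Fin k × Fin m)) := by
        apply Finset.eq_univ_of_card
        simp [hcard]
      intro p
      have := Finset.mem_filter.mp (hfull ▸ Finset.mem_univ p)
      exact this.2
  · rintro ⟨c, hc⟩
    unfold entropy
    rw [neg_eq_zero]
    apply Finset.sum_eq_zero
    intro x _
    by_cases hx : x = c
    · subst hx
      have : pixelProb k m n C x = 1 := by
        unfold pixelProb
        have : Finset.univ.filter (fun p => C p = x) =
            (Finset.univ : Finset (Fin k × Fin m)) := by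
          apply Finset.filter_true_of_mem
          intro p _; exact hc p
        rw [this]
        simp
        simp [hk.ne', hm.ne']
      rw [this]; simp
    · have : pixelProb k m n C x = 0 := by
        unfold pixelProb
        have : Finset.univ.filter (fun p => C p = x) = ∅ := by
          apply Finset.filter_false_of_mem
          intro p _
          rw [hc p]
          exact fun h => hx h.symm
        rw [this]; simp
      rw [this]; simp

/-- Two images are strongly equivalent if and only if their natural entropy
distance `ν̂(A, B) = E(A + (−B))` vanishes. -/
theorem strong_equiv_iff_natural_entropy_distance_eq_zero (k m n : ℕ) [NeZero n]
    (hk : 0 < k) (hm : 0 < m) (A B : Fin k × Fin m → ZMod n) :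
    (∃ S : Fin k × Fin m → ZMod n, (∃ c : ZMod n, ∀ p, S p = c) ∧
      A = fun p => S p + B p) ↔
    entropy k m n (fun p => A p + (-(B p))) = 0 := by
  rw [entropy_eq_zero_iff_const k m n hk hm]
  constructor
  · rintro ⟨S, ⟨c, hSc⟩, hA⟩
    refine ⟨c, fun p => ?_⟩
    simp only [hA, hSc]
    ring
  · rintro ⟨c, hc⟩
    refine ⟨fun _ => c, ⟨c, fun _ => rfl⟩, ?_⟩
    funext p
    have := hc p
    have : A p = c + B p := by
      have h := hc p
      linear_combination (norm := ring_nf) h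
    simpa using this
end

section
/- If the natural entropy distance between two images A and B of size k × m over Z_n (with k, m ≥ 1) vanishes, i.e., ν̂(A, B) = E(A + (−B)) = 0, then A and B are strongly equivalent: there exists a scalar image S with A = S + B. -/
open Finset Real

/-- If the natural entropy distance `ν̂(A, B) = E(A + (−B))` vanishes, then the
images are strongly equivalent. -/
theorem natural_entropy_distance_eq_zero_imp_strong_equiv (k m n : ℕ) [NeZero n]
    (hk : 0 < k) (hm : 0 < m) (A B : Fin k × Fin m → ZMod n)
    (h : entropy k m n (fun p => A p + (-(B p))) = 0) :
    ∃ S : Fin k × Fin m → ZMod n, (∃ c : ZMod n, ∀ p, S p = c) ∧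
      A = fun p => S p + B p := by
  set C : Fin k × Fin m → ZMod n := fun p => A p + (-(B p)) with hC
  have hkm : (0:ℝ) < (k * m : ℝ) := by positivity
  -- each pixelProb is in [0,1]
  have hub : ∀ x, pixelProb k m n C x ≤ 1 := by
    intro x
    unfold pixelProb
    rw [div_le_one hkm]
    have hn : (Finset.univ.filter (fun p => C p = x)).card ≤ k * m := by
      have := (Finset.card_filter_le (Finset.univ : Finset (Fin k × Fin m)) (fun p => C p = x))
      simpa [Fintype.card_prod] using this
    exact_mod_cast hn
  have hlb : ∀ x, 0 ≤ pixelProb k m n C x := by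
    intro x; unfold pixelProb; positivity
  -- each term is nonpositive
  have hterm : ∀ x ∈ (Finset.univ : Finset (ZMod n)),
      pixelProb k m n C x * Real.logb 2 (pixelProb k m n C x) ≤ 0 := by
    intro x _
    apply mul_nonpos_of_nonneg_of_nonpos (hlb x)
    exact Real.logb_nonpos (by norm_num) (hlb x) (hub x)
  have hsum : ∑ x : ZMod n, pixelProb k m n C x * Real.logb 2 (pixelProb k m n C x) = 0 := by
    have := h
    unfold entropy at this
    linarith
  have hzero := (Finset.sum_eq_zero_iff_of_nonpos hterm).mp hsum
  -- pick the gray level of a fixed pixel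
  obtain ⟨p₀⟩ : Nonempty (Fin k × Fin m) := ⟨⟨⟨0, hk⟩, ⟨0, hm⟩⟩⟩
  set x₀ := C p₀ with hx₀
  have hpos : 0 < pixelProb k m n C x₀ := by
    unfold pixelProb
    apply div_pos _ hkm
    have : p₀ ∈ Finset.univ.filter (fun p => C p = x₀) := by simp [hx₀]
    have hc : 0 < (Finset.univ.filter (fun p => C p = x₀)).card :=
      Finset.card_pos.mpr ⟨p₀, this⟩
    exact_mod_cast hc
  have h1 : pixelProb k m n C x₀ = 1 := by
    have := hzero x₀ (Finset.mem_univ _)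
    have hlog : Real.logb 2 (pixelProb k m n C x₀) = 0 := by
      rcases mul_eq_zero.mp this with h' | h'
      · exact absurd h' (ne_of_gt hpos)
      · exact h'
    rcases Real.logb_eq_zero.mp hlog with h' | h' | h' | h' | h' | h' <;>
      first
        | exact h'
        | exact absurd h' (ne_of_gt hpos)
        | linarith [hlb x₀, hpos]
        | norm_num at h'
  -- hence all pixels have C p = x₀
  have hall : ∀ p, C p = x₀ := by
    have hcard : ((Finset.univ.filter (fun p => C p = x₀)).card : ℝ) = (k * m : ℝ) := by
      unfold pixelProb at h1
      field_simp at h1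
      exact_mod_cast h1
    have hcard' : (Finset.univ.filter (fun p => C p = x₀)).card =
        Fintype.card (Fin k × Fin m) := by
      have : ((Finset.univ.filter (fun p => C p = x₀)).card : ℝ)
          = (Fintype.card (Fin k × Fin m) : ℝ) := by
        rw [hcard]; simp [Fintype.card_prod]
      exact_mod_cast this
    have huniv : Finset.univ.filter (fun p => C p = x₀) = Finset.univ := by
      apply Finset.eq_univ_of_card
      simpa using hcard'
    intro p
    have : p ∈ Finset.univ.filter (fun p => C p = x₀) := by rw [huniv]; exact Finset.mem_univ p
    simpa using this
  refine ⟨fun _ => x₀, ⟨x₀, fun _ => rfl⟩, ?_⟩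
  funext p
  have := hall p
  simp only [hC] at this
  have : A p - B p = x₀ := by rw [← this]; ring
  have := sub_eq_iff_eq_add.mp this
  simpa [add_comm] using this
end
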